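/- arXiv:2003.06003 — 3 statements merged into one kernel-verified Lean document; each statement's English description precedes it below -/
import Mathlib

section
/- (Theorem 1) Let Σxx be an n×n real symmetric matrix, Σxy an n×m real matrix, Σyy an m×m real symmetric positive definite matrix, M a p×n real matrix, P a p×p real symmetric matrix, and λ ∈ ℝᵐ with λᵢ > 0 for all i; set S = diag(λ). Define A := −M Σxx Mᵀ + M Σxy S Σxyᵀ Mᵀ, B := M Σxy S, and D := Σyy⁻¹ + S. Then M (Σxx − Σxy (Σyy + S⁻¹)⁻¹ Σxyᵀ) Mᵀ ⪯ P if and only if the (p+m)×(p+m) block matrix [[P + A, B], [Bᵀ, D]] is positive semidefinite. -/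
open Matrix

/-- Theorem 1 of the paper: with S = diag(λ), λᵢ > 0,
A := −M Σxx Mᵀ + M Σxy S Σxyᵀ Mᵀ, B := M Σxy S, D := Σyy⁻¹ + S, we have
M (Σxx − Σxy (Σyy + S⁻¹)⁻¹ Σxyᵀ) Mᵀ ⪯ P  ↔  [[P + A, B], [Bᵀ, D]] ⪰ 0. -/
theorem stmt_3 {n m p : ℕ} (Sxx : Matrix (Fin n) (Fin n) ℝ) (hSxx : Sxx.IsSymm)
    (Sxy : Matrix (Fin n) (Fin m) ℝ)
    (Syy : Matrix (Fin m) (Fin m) ℝ) (hSyy : Syy.PosDef)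
    (M : Matrix (Fin p) (Fin n) ℝ)
    (P : Matrix (Fin p) (Fin p) ℝ) (hP : P.IsSymm)
    (l : Fin m → ℝ) (hl : ∀ i, 0 < l i)
    (S : Matrix (Fin m) (Fin m) ℝ) (hSdef : S = Matrix.diagonal l)
    (A : Matrix (Fin p) (Fin p) ℝ) (hA : A = -(M * Sxx * Mᵀ) + M * Sxy * S * Sxyᵀ * Mᵀ)
    (B : Matrix (Fin p) (Fin m) ℝ) (hB : B = M * Sxy * S)
    (D : Matrix (Fin m) (Fin m) ℝ) (hD : D = Syy⁻¹ + S) :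
    (P - M * (Sxx - Sxy * (Syy + S⁻¹)⁻¹ * Sxyᵀ) * Mᵀ).PosSemidef ↔
      (Matrix.fromBlocks (P + A) B Bᵀ D).PosSemidef := by
  have hS : S.PosDef := hSdef ▸ Matrix.PosDef.diagonal hl
  have hDpd : D.PosDef := hD ▸ hSyy.inv.add hS
  have _instD : Invertible D := hDpd.isUnit.invertible
  have hSu : IsUnit S.det := (Matrix.isUnit_iff_isUnit_det _).mp hS.isUnit
  have hSyyu : IsUnit Syy.det := (Matrix.isUnit_iff_isUnit_det _).mp hSyy.isUnit
  have hSinv : S⁻¹.PosDef := hS.inv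
  -- key identity: (Syy + S⁻¹)⁻¹ = S - S * D⁻¹ * S
  have h2 : (Syy + S⁻¹) * S = Syy * D := by
    rw [Matrix.add_mul, Matrix.nonsing_inv_mul _ hSu, hD, Matrix.mul_add,
      Matrix.mul_nonsing_inv _ hSyyu]
    abel
  have key : (Syy + S⁻¹)⁻¹ = S - S * D⁻¹ * S := by
    refine Matrix.inv_eq_right_inv ?_
    have e1 : (Syy + S⁻¹) * (S - S * D⁻¹ * S)
        = (Syy + S⁻¹) * S - ((Syy + S⁻¹) * S) * D⁻¹ * S := by noncomm_ring
    rw [e1, h2, Matrix.mul_assoc Syy D, Matrix.mul_inv_of_invertible, Matrix.mul_one,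
      hD, Matrix.mul_add, Matrix.mul_nonsing_inv _ hSyyu]
    abel
  -- rewrite the block condition via the Schur complement
  have hBH : Bᵀ = Bᴴ := (B.conjTranspose_eq_transpose_of_trivial).symm
  rw [hBH, Matrix.PosDef.fromBlocks₂₂ _ _ hDpd]
  have hST : Sᵀ = S := by
    have := hS.isHermitian
    rwa [Matrix.IsHermitian, Matrix.conjTranspose_eq_transpose_of_trivial] at this
  have heq : P + A - B * D⁻¹ * Bᴴ
      = P - M * (Sxx - Sxy * (Syy + S⁻¹)⁻¹ * Sxyᵀ) * Mᵀ := by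
    rw [← hBH, hA, hB, key]
    simp only [Matrix.transpose_mul, hST, Matrix.sub_mul, Matrix.mul_sub, Matrix.add_mul,
      Matrix.mul_add, Matrix.mul_assoc]
    abel
  rw [heq]
end

section
/- Let Σxx be an n×n real symmetric matrix, Σxy an n×m real matrix, Σyy an m×m real symmetric positive definite matrix, M a p×n real matrix, P a p×p real symmetric matrix, and λ ∈ ℝᵐ with λᵢ > 0 for all i; set S = diag(λ), A := −M Σxx Mᵀ + M Σxy S Σxyᵀ Mᵀ, B := M Σxy S, D := Σyy⁻¹ + S. If the block matrix [[P + A, B], [Bᵀ, D]] is positive semidefinite, then the Kalman posterior covariance Σ⁺ := Σxx − Σxy (Σyy + S⁻¹)⁻¹ Σxyᵀ corresponding to measurement noise covariance R = S⁻¹ satisfies M Σ⁺ Mᵀ ⪯ P. -/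
open Matrix

/-- Guarantee direction of Theorem 1: if the LMI block matrix
[[P + A, B], [Bᵀ, D]] is positive semidefinite, then the Kalman posterior
covariance Σ⁺ = Σxx − Σxy (Σyy + S⁻¹)⁻¹ Σxyᵀ satisfies M Σ⁺ Mᵀ ⪯ P. -/
theorem stmt_4 {n m p : ℕ} (Sxx : Matrix (Fin n) (Fin n) ℝ) (hSxx : Sxx.IsSymm)
    (Sxy : Matrix (Fin n) (Fin m) ℝ)
    (Syy : Matrix (Fin m) (Fin m) ℝ) (hSyy : Syy.PosDef)
    (M : Matrix (Fin p) (Fin n) ℝ)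
    (P : Matrix (Fin p) (Fin p) ℝ) (hP : P.IsSymm)
    (l : Fin m → ℝ) (hl : ∀ i, 0 < l i)
    (S : Matrix (Fin m) (Fin m) ℝ) (hSdef : S = Matrix.diagonal l)
    (A : Matrix (Fin p) (Fin p) ℝ) (hA : A = -(M * Sxx * Mᵀ) + M * Sxy * S * Sxyᵀ * Mᵀ)
    (B : Matrix (Fin p) (Fin m) ℝ) (hB : B = M * Sxy * S)
    (D : Matrix (Fin m) (Fin m) ℝ) (hD : D = Syy⁻¹ + S)
    (hLMI : (Matrix.fromBlocks (P + A) B Bᵀ D).PosSemidef) :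
    (P - M * (Sxx - Sxy * (Syy + S⁻¹)⁻¹ * Sxyᵀ) * Mᵀ).PosSemidef := by
  -- S is positive definite
  have hSpd : S.PosDef := by rw [hSdef]; exact Matrix.PosDef.diagonal hl
  have hDpd : D.PosDef := by rw [hD]; exact hSyy.inv.add hSpd
  have hKpd : (Syy + S⁻¹).PosDef := hSyy.add hSpd.inv
  haveI iD : Invertible D := hDpd.isUnit.invertible
  haveI iS : Invertible S := hSpd.isUnit.invertible
  haveI iSyy : Invertible Syy := hSyy.isUnit.invertible
  haveI iK : Invertible (Syy + S⁻¹) := hKpd.isUnit.invertible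
  -- key matrix identity
  have hE1 : (Syy⁻¹ + S) * (Syy⁻¹ + S)⁻¹ = 1 := by
    rw [← hD]; exact Matrix.mul_inv_of_invertible D
  have key : (Syy + S⁻¹)⁻¹ = S - S * (Syy⁻¹ + S)⁻¹ * S := by
    apply Matrix.inv_eq_right_inv
    have h1 : S⁻¹ * S = 1 := Matrix.inv_mul_of_invertible S
    have h2 : Syy * S + 1 = Syy * (Syy⁻¹ + S) := by
      rw [Matrix.mul_add, Matrix.mul_inv_of_invertible]; abel
    calc (Syy + S⁻¹) * (S - S * (Syy⁻¹ + S)⁻¹ * S)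
        = Syy * S + S⁻¹ * S - ((Syy + S⁻¹) * S) * ((Syy⁻¹ + S)⁻¹ * S) := by
          noncomm_ring
      _ = Syy * S + 1 - (Syy * S + 1) * ((Syy⁻¹ + S)⁻¹ * S) := by
          rw [Matrix.add_mul, h1]
      _ = Syy * S + 1 - Syy * ((Syy⁻¹ + S) * (Syy⁻¹ + S)⁻¹) * S := by
          rw [h2]; noncomm_ring
      _ = 1 := by rw [hE1]; noncomm_ring
  -- Schur complement
  have hBH : Bᴴ = Bᵀ := by ext i j; simp
  have hSchur : ((P + A) - B * D⁻¹ * Bᵀ).PosSemidef := by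
    rw [← hBH]
    exact (Matrix.PosDef.fromBlocks₂₂ (P + A) B hDpd).mp (by rw [hBH]; exact hLMI)
  have hSt : Sᵀ = S := by rw [hSdef, Matrix.diagonal_transpose]
  have heq : P - M * (Sxx - Sxy * (Syy + S⁻¹)⁻¹ * Sxyᵀ) * Mᵀ
      = (P + A) - B * D⁻¹ * Bᵀ := by
    subst hA hB hD
    rw [key]
    simp only [Matrix.transpose_mul, hSt, Matrix.mul_sub, Matrix.sub_mul,
      Matrix.mul_assoc]
    abel
  rw [heq]
  exact hSchur
end

section
/- Let Σxx and Σyy be n×n and m×m real symmetric matrices, Σxy an n×m real matrix, and R an m×m real symmetric positive definite matrix. If the (n+m)×(n+m) block matrix [[Σxx, Σxy], [Σxyᵀ, Σyy]] is positive semidefinite, then Σxx − Σxy (Σyy + R)⁻¹ Σxyᵀ is positive semidefinite. -/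
open Matrix

/-- If the joint covariance [[Σxx, Σxy], [Σxyᵀ, Σyy]] is positive semidefinite
and R is positive definite, then the Kalman posterior covariance
Σxx − Σxy (Σyy + R)⁻¹ Σxyᵀ is positive semidefinite. -/
theorem stmt_5 {n m : ℕ} (Sxx : Matrix (Fin n) (Fin n) ℝ) (hSxx : Sxx.IsSymm)
    (Syy : Matrix (Fin m) (Fin m) ℝ) (hSyy : Syy.IsSymm)
    (Sxy : Matrix (Fin n) (Fin m) ℝ)
    (R : Matrix (Fin m) (Fin m) ℝ) (hR : R.PosDef)
    (hjoint : (Matrix.fromBlocks Sxx Sxy Sxyᵀ Syy).PosSemidef) :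
    (Sxx - Sxy * (Syy + R)⁻¹ * Sxyᵀ).PosSemidef := by
  have hSyyps : Syy.PosSemidef := by
    have := hjoint.submatrix Sum.inr
    convert this using 1
    ext i j
    simp
  have hD : (Syy + R).PosDef := Matrix.PosDef.posSemidef_add hSyyps hR
  haveI := hD.isUnit.invertible
  haveI := hR.isUnit.invertible
  have hRblk : (Matrix.fromBlocks (0 : Matrix (Fin n) (Fin n) ℝ) 0 0 R).PosSemidef := by
    have h0 : (0 : Matrix (Fin n) (Fin m) ℝ)ᴴ = 0 := by simp
    rw [← h0]
    exact (Matrix.PosDef.fromBlocks₂₂ 0 0 hR).2 (by simpa using Matrix.PosSemidef.zero)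
  have hsum := hjoint.add hRblk
  rw [Matrix.fromBlocks_add, add_zero, add_zero, add_zero] at hsum
  have := (Matrix.PosDef.fromBlocks₂₂ Sxx Sxy hD).1 (by
    simpa [Matrix.conjTranspose_eq_transpose_of_trivial] using hsum)
  simpa [Matrix.conjTranspose_eq_transpose_of_trivial] using this
end
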